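/- For all n ≥ 1 and i, j ≥ 0, the coefficients d_{n,i,j} satisfy d_{2n,i,j} = (2i+1)d_{2n-1,i,j} + (2j+2)d_{2n-1,i-1,j+1} + (4n-2i-2j+1)d_{2n-1,i-1,j} and d_{2n+1,i,j} = (2i+1)d_{2n,i,j-1} + (2j+1)d_{2n,i-1,j} + (4n-2i-2j+4)d_{2n,i-1,j-1}. -/

import Mathlib

open MvPolynomial Finset

/-- The Dumont derivation on `ℚ[x,y,z]`: `D x = y*z`, `D y = x*z`, `D z = x*y`. -/
noncomputable def Dum : Derivation ℚ (MvPolynomial (Fin 3) ℚ) (MvPolynomial (Fin 3) ℚ) :=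
  MvPolynomial.mkDerivation ℚ ![X 1 * X 2, X 0 * X 2, X 0 * X 1]

/-- The operator `p ↦ D (x * p)`. -/
noncomputable def Dx : MvPolynomial (Fin 3) ℚ → MvPolynomial (Fin 3) ℚ :=
  fun p => Dum (X 0 * p)

noncomputable def D2 : Derivation ℚ (MvPolynomial (Fin 3) ℚ) (MvPolynomial (Fin 3) ℚ) :=
  (X 1 * X 2 : MvPolynomial (Fin 3) ℚ) • pderiv 0 + (X 0 * X 2 : MvPolynomial (Fin 3) ℚ) • pderiv 1
    + (X 0 * X 1 : MvPolynomial (Fin 3) ℚ) • pderiv 2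

lemma Dum_eq : Dum = D2 := by
  apply MvPolynomial.derivation_ext
  intro i
  fin_cases i <;> simp [Dum, D2]

lemma Dx_eq (q : MvPolynomial (Fin 3) ℚ) :
    Dx q = X 1 * X 2 * q + X 0 * (X 1 * X 2) * pderiv 0 q
      + X 0 * (X 0 * X 2) * pderiv 1 q + X 0 * (X 0 * X 1) * pderiv 2 q := by
  have h : Dx q = X (0:Fin 3) • Dum q + q • Dum (X 0) := Derivation.leibniz _ _ _
  rw [h, Dum_eq]
  simp only [D2, Dum, mkDerivation_X]
  simp [smul_eq_mul, Derivation.add_apply, Derivation.smul_apply]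
  ring

/-- exponent vector -/
noncomputable def E (a b c : ℕ) : Fin 3 →₀ ℕ :=
  Finsupp.single 0 a + Finsupp.single 1 b + Finsupp.single 2 c

lemma E_apply (a b c : ℕ) : E a b c 0 = a ∧ E a b c 1 = b ∧ E a b c 2 = c := by
  simp [E, Finsupp.single_apply]

lemma fin3ext (u v : Fin 3 →₀ ℕ) : u = v ↔ u 0 = v 0 ∧ u 1 = v 1 ∧ u 2 = v 2 := by
  constructor
  · rintro rfl; exact ⟨rfl, rfl, rfl⟩
  · rintro ⟨h0, h1, h2⟩
    ext i
    fin_cases i <;> assumption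

noncomputable def Cf (q : MvPolynomial (Fin 3) ℚ) (a b c : ℤ) : ℚ :=
  if 0 ≤ a ∧ 0 ≤ b ∧ 0 ≤ c then coeff (E a.toNat b.toNat c.toNat) q else 0

lemma Cf_add (q q' : MvPolynomial (Fin 3) ℚ) (a b c : ℤ) :
    Cf (q + q') a b c = Cf q a b c + Cf q' a b c := by
  unfold Cf; split <;> simp [coeff_add]

lemma Cf_smul (v : ℚ) (q : MvPolynomial (Fin 3) ℚ) (a b c : ℤ) :
    Cf (v • q) a b c = v * Cf q a b c := by
  unfold Cf; split <;> simp

lemma Xm (i : Fin 3) : (X i : MvPolynomial (Fin 3) ℚ) = monomial (Finsupp.single i 1) 1 :=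
  (pow_one (X i)).symm.trans X_pow_eq_monomial

set_option maxHeartbeats 1000000 in
lemma Cf_Dx_monomial (s : Fin 3 →₀ ℕ) (a b c : ℤ) :
    Cf (Dx (monomial s 1)) a b c
      = ((a:ℚ)+1) * Cf (monomial s 1) a (b-1) (c-1)
        + ((b:ℚ)+1) * Cf (monomial s 1) (a-2) (b+1) (c-1)
        + ((c:ℚ)+1) * Cf (monomial s 1) (a-2) (b-1) (c+1) := by
  have h01 : (0:Fin 3) ≠ 1 := by decide
  have h02 : (0:Fin 3) ≠ 2 := by decide
  have h12 : (1:Fin 3) ≠ 2 := by decide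
  have t1 : Cf (X 1 * X 2 * monomial s 1) a b c = Cf (monomial s 1) a (b-1) (c-1) := by
    unfold Cf E
    simp only [Xm, monomial_mul, one_mul, mul_one, coeff_monomial, fin3ext, Finsupp.add_apply,
      Finsupp.single_apply, if_pos rfl, if_neg h01, if_neg h02, if_neg h12,
      if_neg (Ne.symm h01), if_neg (Ne.symm h02), if_neg (Ne.symm h12)]
    split_ifs <;> first | rfl | (exfalso; omega)
  have t2 : Cf (X 0 * (X 1 * X 2) * pderiv 0 (monomial s 1)) a b c
      = (a:ℚ) * Cf (monomial s 1) a (b-1) (c-1) := by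
    unfold Cf E
    simp only [pderiv_monomial, mul_one, one_mul, Xm, monomial_mul, coeff_monomial, fin3ext,
      Finsupp.add_apply, Finsupp.tsub_apply, Finsupp.single_apply, if_pos rfl, if_neg h01,
      if_neg h02, if_neg h12, if_neg (Ne.symm h01), if_neg (Ne.symm h02), if_neg (Ne.symm h12)]
    generalize s 0 = p0
    split_ifs <;>
      first
        | (exfalso; omega)
        | omega
        | rfl
        | (norm_cast; omega)
        | norm_cast
        | simp
  have t3 : Cf (X 0 * (X 0 * X 2) * pderiv 1 (monomial s 1)) a b c
      = ((b:ℚ)+1) * Cf (monomial s 1) (a-2) (b+1) (c-1) := by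
    unfold Cf E
    simp only [pderiv_monomial, mul_one, one_mul, Xm, monomial_mul, coeff_monomial, fin3ext,
      Finsupp.add_apply, Finsupp.tsub_apply, Finsupp.single_apply, if_pos rfl, if_neg h01,
      if_neg h02, if_neg h12, if_neg (Ne.symm h01), if_neg (Ne.symm h02), if_neg (Ne.symm h12)]
    generalize s 1 = p1
    split_ifs <;>
      first
        | (exfalso; omega)
        | omega
        | rfl
        | (norm_cast; omega)
        | norm_cast
        | simp
  have t4 : Cf (X 0 * (X 0 * X 1) * pderiv 2 (monomial s 1)) a b c
      = ((c:ℚ)+1) * Cf (monomial s 1) (a-2) (b-1) (c+1) := by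
    unfold Cf E
    simp only [pderiv_monomial, mul_one, one_mul, Xm, monomial_mul, coeff_monomial, fin3ext,
      Finsupp.add_apply, Finsupp.tsub_apply, Finsupp.single_apply, if_pos rfl, if_neg h01,
      if_neg h02, if_neg h12, if_neg (Ne.symm h01), if_neg (Ne.symm h02), if_neg (Ne.symm h12)]
    generalize s 2 = p2
    split_ifs <;>
      first
        | (exfalso; omega)
        | omega
        | rfl
        | (norm_cast; omega)
        | norm_cast
        | simp
  rw [Dx_eq, Cf_add, Cf_add, Cf_add, t1, t2, t3, t4]
  ring

lemma Dx_add (p q : MvPolynomial (Fin 3) ℚ) : Dx (p + q) = Dx p + Dx q := by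
  unfold Dx; rw [mul_add, map_add]

lemma Dx_smul (v : ℚ) (q : MvPolynomial (Fin 3) ℚ) : Dx (v • q) = v • Dx q := by
  unfold Dx; rw [mul_smul_comm, Derivation.map_smul]

lemma Cstep (q : MvPolynomial (Fin 3) ℚ) (a b c : ℤ) :
    Cf (Dx q) a b c
      = ((a:ℚ)+1) * Cf q a (b-1) (c-1)
        + ((b:ℚ)+1) * Cf q (a-2) (b+1) (c-1)
        + ((c:ℚ)+1) * Cf q (a-2) (b-1) (c+1) := by
  induction q using MvPolynomial.induction_on' with
  | monomial u v =>
    have hv : (monomial u v : MvPolynomial (Fin 3) ℚ) = v • monomial u 1 := by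
      rw [← C_mul', C_mul_monomial, mul_one]
    rw [hv, Dx_smul, Cf_smul, Cf_smul, Cf_smul, Cf_smul, Cf_Dx_monomial]
    ring
  | add p q hp hq =>
    rw [Dx_add, Cf_add, Cf_add, Cf_add, Cf_add, hp, hq]
    ring

lemma Cvanish (n : ℕ) (a b c : ℤ) (h : a + b + c ≠ 2*(n:ℤ) + 1) :
    Cf (Dx^[n] (X 1)) a b c = 0 := by
  induction n generalizing a b c with
  | zero =>
    have h12 : (1:Fin 3) ≠ 2 := by decide
    have h10 : (1:Fin 3) ≠ 0 := by decide
    simp only [Function.iterate_zero_apply]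
    unfold Cf E
    rw [Xm]
    simp only [coeff_monomial, fin3ext, Finsupp.add_apply, Finsupp.single_apply, if_pos rfl,
      if_neg h12, if_neg h10, if_neg (Ne.symm h12), if_neg (Ne.symm h10)]
    split_ifs <;> first | rfl | (exfalso; omega)
  | succ n ih =>
    rw [Function.iterate_succ_apply', Cstep,
      ih _ _ _ (by omega), ih _ _ _ (by omega), ih _ _ _ (by omega)]
    ring

lemma coeff_ne (n x y z : ℕ) (h : (x:ℤ) + y + z ≠ 2*(n:ℤ)+1) :
    coeff (Finsupp.single 0 x + Finsupp.single 1 y + Finsupp.single 2 z) (Dx^[n] (X 1)) = 0 := by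
  have h2 := Cvanish n x y z h
  unfold Cf E at h2
  rwa [if_pos ⟨Int.natCast_nonneg _, Int.natCast_nonneg _, Int.natCast_nonneg _⟩,
    Int.toNat_natCast, Int.toNat_natCast, Int.toNat_natCast] at h2

/-- `dC n i j` is the coefficient `d_{n,i,j}` of `(Dx)^n(y)`:
for even `n`, the coefficient of `x^(2i) y^(2j+1) z^(2n-2i-2j)`;
for odd `n`, the coefficient of `x^(2i) y^(2j) z^(2n+1-2i-2j)`.
Coefficients with negative indices are `0`. -/
noncomputable def dC (n : ℕ) (i j : ℤ) : ℚ :=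
  if 0 ≤ i ∧ 0 ≤ j then
    MvPolynomial.coeff
      (Finsupp.single 0 (2*i).toNat
        + Finsupp.single 1 ((if Even n then 2*j+1 else 2*j).toNat)
        + Finsupp.single 2 ((2*(n:ℤ) - 2*i - 2*j + if Even n then 0 else 1).toNat))
      (Dx^[n] (X 1))
  else 0

lemma dC_eq (n : ℕ) (i j : ℤ) :
    dC n i j = Cf (Dx^[n] (X 1)) (2*i) (2*j + if Even n then 1 else 0)
      (2*(n:ℤ) - 2*i - 2*j + if Even n then 0 else 1) := by
  by_cases hij : 0 ≤ i ∧ 0 ≤ j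
  case neg =>
    unfold dC Cf
    rw [if_neg hij, if_neg (by omega)]
  case pos =>
    obtain ⟨hi, hj⟩ := hij
    rcases em (Even n) with he | he
    · obtain ⟨m, hm⟩ := id he
      unfold dC Cf E
      simp only [if_pos he, if_pos (⟨hi, hj⟩ : 0 ≤ i ∧ 0 ≤ j)]
      by_cases hc : (0:ℤ) ≤ 2*(n:ℤ) - 2*i - 2*j + 0
      · rw [if_pos ⟨by omega, by omega, hc⟩]
      · rw [if_neg (by omega), show (2*(n:ℤ) - 2*i - 2*j + 0).toNat = 0 by omega]
        exact coeff_ne n _ _ 0 (by omega)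
    · obtain ⟨m, hm⟩ := Nat.not_even_iff_odd.mp he
      unfold dC Cf E
      simp only [if_neg he, if_pos (⟨hi, hj⟩ : 0 ≤ i ∧ 0 ≤ j)]
      by_cases hc : (0:ℤ) ≤ 2*(n:ℤ) - 2*i - 2*j + 1
      · rw [if_pos ⟨by omega, by omega, hc⟩]
        norm_num
      · rw [if_neg (by omega), show (2*(n:ℤ) - 2*i - 2*j + 1).toNat = 0 by omega]
        exact coeff_ne n _ _ 0 (by omega)

theorem stmt6 (n : ℕ) (hn : 1 ≤ n) (i j : ℤ) (hi : 0 ≤ i) (hj : 0 ≤ j) :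
    dC (2*n) i j =
      (2*(i:ℚ)+1) * dC (2*n-1) i j + (2*(j:ℚ)+2) * dC (2*n-1) (i-1) (j+1)
        + (4*(n:ℚ)-2*(i:ℚ)-2*(j:ℚ)+1) * dC (2*n-1) (i-1) j ∧
    dC (2*n+1) i j =
      (2*(i:ℚ)+1) * dC (2*n) i (j-1) + (2*(j:ℚ)+1) * dC (2*n) (i-1) j
        + (4*(n:ℚ)-2*(i:ℚ)-2*(j:ℚ)+4) * dC (2*n) (i-1) (j-1) := by
  have heA : Even (2*n) := even_two_mul n
  have heB : ¬ Even (2*n-1) := fun h => by obtain ⟨m, hm⟩ := h; omega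
  have heC : ¬ Even (2*n+1) := fun h => by obtain ⟨m, hm⟩ := h; omega
  have hc1 : ((2*n-1 : ℕ) : ℤ) = 2*(n:ℤ)-1 := by omega
  constructor
  · have hiter : Dx^[2*n] (X 1) = Dx (Dx^[2*n-1] (X 1)) := by
      have h2 : 2*n - 1 + 1 = 2*n := by omega
      calc Dx^[2*n] (X 1) = Dx^[2*n-1+1] (X 1) := by rw [h2]
        _ = Dx (Dx^[2*n-1] (X 1)) := Function.iterate_succ_apply' _ _ _
    simp only [dC_eq, if_pos heA, if_neg heB]
    rw [hiter, Cstep, hc1]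
    push_cast
    ring_nf
  · have hiter : Dx^[2*n+1] (X 1) = Dx (Dx^[2*n] (X 1)) := by
      rw [Function.iterate_succ_apply']
    simp only [dC_eq, if_pos heA, if_neg heC]
    rw [hiter, Cstep]
    push_cast
    ring_nf
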